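/- (Spacing Test weight) Let η = c_k(j_k,s_k) = P^⊥_{k-1}X_{j_k} / (s_k − X_{j_k}ᵀ(X_{M_{k-1}}^+)ᵀ s_{M_{k-1}}) and ω_k = ‖(X_{M_k}^+)ᵀ s_{M_k} − (X_{M_{k-1}}^+)ᵀ s_{M_{k-1}}‖₂. Then ‖η‖₂ = ω_k⁻¹; equivalently ω_k² = (s_k − s_{M_{k-1}}ᵀ X_{M_{k-1}}^+X_{j_k})² / (X_{j_k}ᵀP^⊥_{k-1}X_{j_k}). -/

import Mathlib

open Matrix

private lemma dot_mulVec' {n m : ℕ} (A : Matrix (Fin n) (Fin m) ℝ) (v : Fin n → ℝ)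
    (w : Fin m → ℝ) : v ⬝ᵥ A.mulVec w = Aᵀ.mulVec v ⬝ᵥ w := by
  rw [Matrix.dotProduct_mulVec, Matrix.mulVec_transpose]

private lemma snoc_mulVec {n m : ℕ} (X1 : Matrix (Fin n) (Fin m) ℝ) (xk : Fin n → ℝ)
    (XM : Matrix (Fin n) (Fin (m + 1)) ℝ) (hXMdef : ∀ i, XM i = Fin.snoc (X1 i) (xk i))
    (w1 : Fin m → ℝ) (wk : ℝ) :
    XM.mulVec (Fin.snoc w1 wk) = X1.mulVec w1 + wk • xk := by
  funext i
  simp [Matrix.mulVec, dotProduct, hXMdef, Fin.sum_univ_castSucc, mul_comm]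

private lemma snoc_tr_mulVec {n m : ℕ} (X1 : Matrix (Fin n) (Fin m) ℝ) (xk : Fin n → ℝ)
    (XM : Matrix (Fin n) (Fin (m + 1)) ℝ) (hXMdef : ∀ i, XM i = Fin.snoc (X1 i) (xk i))
    (y : Fin n → ℝ) :
    XMᵀ.mulVec y = Fin.snoc (X1ᵀ.mulVec y) (xk ⬝ᵥ y) := by
  funext j
  refine Fin.lastCases ?_ (fun j => ?_) j
  · simp [Matrix.mulVec, dotProduct, Matrix.transpose, hXMdef]
  · simp [Matrix.mulVec, dotProduct, Matrix.transpose, hXMdef]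

/-- Spacing-test weight (Lemma 4): with
`η = c_k(j_k,s_k) = P^⊥_{k-1}X_{j_k}/(s_k - X_{j_k}ᵀ(X_{M_{k-1}}^+)ᵀ s_{M_{k-1}})` and
`ω_k = ‖(X_{M_k}^+)ᵀ s_{M_k} - (X_{M_{k-1}}^+)ᵀ s_{M_{k-1}}‖₂`, we have `‖η‖₂ = ω_k⁻¹`;
equivalently `ω_k² = (s_k - s_{M_{k-1}}ᵀ X_{M_{k-1}}^+ X_{j_k})² / (X_{j_k}ᵀ P^⊥_{k-1} X_{j_k})`.
Here `X1 = X_{M_{k-1}}`, `xk = X_{j_k}` and `XM = [X1, xk] = X_{M_k}`. -/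
theorem spacing_test_weight (n m : ℕ)
    (X1 : Matrix (Fin n) (Fin m) ℝ) (xk : Fin n → ℝ)
    (XM : Matrix (Fin n) (Fin (m + 1)) ℝ) (hXMdef : ∀ i, XM i = Fin.snoc (X1 i) (xk i))
    (hX1 : IsUnit (X1ᵀ * X1).det) (hXM : IsUnit (XMᵀ * XM).det)
    (s1 : Fin m → ℝ) (sk : ℝ) (sM : Fin (m + 1) → ℝ) (hsM : sM = Fin.snoc s1 sk)
    (P1 : Matrix (Fin n) (Fin n) ℝ) (hP1 : P1 = X1 * (X1ᵀ * X1)⁻¹ * X1ᵀ)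
    (d : ℝ) (hd : d = sk - xk ⬝ᵥ (X1 * (X1ᵀ * X1)⁻¹).mulVec s1) (hd0 : d ≠ 0)
    (η : Fin n → ℝ)
    (hη : η = d⁻¹ • ((1 : Matrix (Fin n) (Fin n) ℝ) - P1).mulVec xk)
    (ωk : ℝ)
    (hω : ωk = Real.sqrt
      (((XM * (XMᵀ * XM)⁻¹).mulVec sM - (X1 * (X1ᵀ * X1)⁻¹).mulVec s1) ⬝ᵥ
        ((XM * (XMᵀ * XM)⁻¹).mulVec sM - (X1 * (X1ᵀ * X1)⁻¹).mulVec s1)))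
    (hdenom : xk ⬝ᵥ ((1 : Matrix (Fin n) (Fin n) ℝ) - P1).mulVec xk ≠ 0) :
    Real.sqrt (η ⬝ᵥ η) = ωk⁻¹ ∧
      ωk ^ 2 = d ^ 2 / (xk ⬝ᵥ ((1 : Matrix (Fin n) (Fin n) ℝ) - P1).mulVec xk) := by
  set A := X1ᵀ * X1 with hA
  set G := XMᵀ * XM with hG
  have hAinv : A * A⁻¹ = 1 := Matrix.mul_nonsing_inv _ hX1
  have hAinv' : A⁻¹ * A = 1 := Matrix.nonsing_inv_mul _ hX1
  have hGinv' : G⁻¹ * G = 1 := Matrix.nonsing_inv_mul _ hXM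
  have hAsymm : Aᵀ = A := by rw [hA, Matrix.transpose_mul, Matrix.transpose_transpose]
  have hAinvsymm : (A⁻¹)ᵀ = A⁻¹ := by rw [Matrix.transpose_nonsing_inv, hAsymm]
  set b := X1ᵀ.mulVec xk with hb
  set q := xk ⬝ᵥ ((1 : Matrix (Fin n) (Fin n) ℝ) - P1).mulVec xk with hq
  set z := ((1 : Matrix (Fin n) (Fin n) ℝ) - P1).mulVec xk with hz
  have hP1symm : P1ᵀ = P1 := by
    rw [hP1, Matrix.transpose_mul, Matrix.transpose_mul, Matrix.transpose_transpose,
      hAinvsymm, Matrix.mul_assoc]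
  have hP1idem : P1 * P1 = P1 := by
    rw [hP1]
    simp only [Matrix.mul_assoc]
    rw [← Matrix.mul_assoc X1ᵀ X1, ← hA, ← Matrix.mul_assoc A⁻¹ A, hAinv', Matrix.one_mul]
  have hMsymm : ((1 : Matrix (Fin n) (Fin n) ℝ) - P1)ᵀ = 1 - P1 := by
    rw [Matrix.transpose_sub, Matrix.transpose_one, hP1symm]
  have hMidem : ((1 : Matrix (Fin n) (Fin n) ℝ) - P1) * (1 - P1) = 1 - P1 := by
    rw [mul_sub, sub_mul, sub_mul, hP1idem]
    simp
  have hPxk : P1.mulVec xk = X1.mulVec (A⁻¹.mulVec b) := by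
    rw [hP1, ← Matrix.mulVec_mulVec, ← Matrix.mulVec_mulVec, hb]
  have hd' : d = sk - b ⬝ᵥ A⁻¹.mulVec s1 := by
    rw [hd, ← Matrix.mulVec_mulVec, dot_mulVec']
  have hxz : ∀ y : Fin m → ℝ, xk ⬝ᵥ X1.mulVec y = b ⬝ᵥ y := fun y => dot_mulVec' X1 xk y
  have hq' : q = xk ⬝ᵥ xk - b ⬝ᵥ A⁻¹.mulVec b := by
    rw [hq, hz, Matrix.sub_mulVec, Matrix.one_mulVec, dotProduct_sub, hPxk, hxz]
  set w1 : Fin m → ℝ := A⁻¹.mulVec s1 - (d / q) • A⁻¹.mulVec b with hw1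
  have hXMw : XM.mulVec (Fin.snoc w1 (d / q)) = X1.mulVec w1 + (d / q) • xk :=
    snoc_mulVec X1 xk XM hXMdef w1 (d / q)
  have htop : X1ᵀ.mulVec (X1.mulVec w1 + (d / q) • xk) = s1 := by
    rw [Matrix.mulVec_add, Matrix.mulVec_smul, Matrix.mulVec_mulVec, ← hA, ← hb, hw1,
      Matrix.mulVec_sub, Matrix.mulVec_smul, Matrix.mulVec_mulVec, Matrix.mulVec_mulVec,
      hAinv, Matrix.one_mulVec, Matrix.one_mulVec]
    abel
  have hbot : xk ⬝ᵥ (X1.mulVec w1 + (d / q) • xk) = sk := by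
    rw [dotProduct_add, hxz, hw1, dotProduct_sub, dotProduct_smul, dotProduct_smul]
    have h1 : b ⬝ᵥ A⁻¹.mulVec s1 = sk - d := by rw [hd']; ring
    have h2 : b ⬝ᵥ A⁻¹.mulVec b = xk ⬝ᵥ xk - q := by rw [hq']; ring
    rw [h1, h2]
    field_simp
    simp only [smul_eq_mul]
    linear_combination div_mul_cancel₀ d hdenom
  have hGw : G.mulVec (Fin.snoc w1 (d / q)) = sM := by
    rw [hG, ← Matrix.mulVec_mulVec, hXMw, snoc_tr_mulVec X1 xk XM hXMdef, htop, hbot, hsM]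
  have hGinvsM : G⁻¹.mulVec sM = Fin.snoc w1 (d / q) := by
    rw [← hGw, Matrix.mulVec_mulVec, hGinv', Matrix.one_mulVec]
  have hv : (XM * G⁻¹).mulVec sM - (X1 * A⁻¹).mulVec s1 = (d / q) • z := by
    rw [← Matrix.mulVec_mulVec, hGinvsM, hXMw, hw1, Matrix.mulVec_sub, Matrix.mulVec_smul,
      Matrix.mulVec_mulVec, ← hPxk, hz, Matrix.sub_mulVec, Matrix.one_mulVec, smul_sub,
      ← Matrix.mulVec_mulVec]
    abel
  have hzz : z ⬝ᵥ z = q := by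
    have h : z ⬝ᵥ z = ((1 - P1).mulVec z) ⬝ᵥ xk := by
      rw [dotProduct_comm, hz, dot_mulVec', hMsymm, dotProduct_comm]
    rw [h, hz, Matrix.mulVec_mulVec, hMidem, dotProduct_comm, hq]
  have hq0 : 0 < q := by
    have hqn : 0 ≤ q := by
      rw [← hzz]; exact Finset.sum_nonneg fun i _ => mul_self_nonneg (z i)
    exact lt_of_le_of_ne hqn (Ne.symm hdenom)
  have hηη : η ⬝ᵥ η = q / d ^ 2 := by
    rw [hη, smul_dotProduct, dotProduct_smul, hzz, smul_eq_mul, smul_eq_mul]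
    ring
  have hvv : ((XM * G⁻¹).mulVec sM - (X1 * A⁻¹).mulVec s1) ⬝ᵥ
      ((XM * G⁻¹).mulVec sM - (X1 * A⁻¹).mulVec s1) = d ^ 2 / q := by
    rw [hv, smul_dotProduct, dotProduct_smul, hzz, smul_eq_mul, smul_eq_mul]
    field_simp
  have hωk : ωk = Real.sqrt (d ^ 2 / q) := by rw [hω, hvv]
  constructor
  · rw [hηη, hωk, ← Real.sqrt_inv]
    congr 1
    rw [inv_div]
  · rw [hωk, Real.sq_sqrt (by positivity)]
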